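/- Let q ≡ 3 (mod 4) be an odd prime power and let a, b ∈ F_q be nonzero with ba⁻¹ a square in F_q. Then the point ⟨(a,b,0)⟩ is H-free. -/

import Mathlib

noncomputable section

/-- Three points of PG(2,q) are collinear if they have linearly dependent representatives. -/
def Coll3 {F : Type*} [Field F] (P Q R : Projectivization F (Fin 3 → F)) : Prop :=
  ¬ LinearIndependent F ![P.rep, Q.rep, R.rep]

/-- A point is `S`-covered if it lies on a line through two distinct points of `S`. -/
def PGCovered {F : Type*} [Field F] (S : Set (Projectivization F (Fin 3 → F)))
    (P : Projectivization F (Fin 3 → F)) : Prop :=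
  ∃ Q ∈ S, ∃ R ∈ S, Q ≠ R ∧ Coll3 P Q R

/-- A point not in `S` is `S`-free if it is not `S`-covered. -/
def PGFree {F : Type*} [Field F] (S : Set (Projectivization F (Fin 3 → F)))
    (P : Projectivization F (Fin 3 → F)) : Prop :=
  P ∉ S ∧ ¬ PGCovered S P

lemma vec_ne_zero {F : Type*} [Field F] (v : Fin 3 → F) (i : Fin 3) (h : v i ≠ 0) : v ≠ 0 :=
  fun hv => h (by simp [hv])

/-- The set `H = {⟨(1,s⁴,s²)⟩ : s ∈ F}` of points of PG(2,q). -/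
def HSet (F : Type*) [Field F] : Set (Projectivization F (Fin 3 → F)) :=
  {P | ∃ s : F, P = Projectivization.mk F ![1, s ^ 4, s ^ 2] (vec_ne_zero _ 0 (by simp))}

/-- The conic `C : XY = Z²` in PG(2,q).  (Membership does not depend on the choice of
representative since the equation is homogeneous.) -/
def conicC (F : Type*) [Field F] : Set (Projectivization F (Fin 3 → F)) :=
  {P | P.rep 0 * P.rep 1 = P.rep 2 ^ 2}

/-- An arc: a set of points no three of which are collinear. -/
def IsPGArc {F : Type*} [Field F] (S : Set (Projectivization F (Fin 3 → F))) : Prop :=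
  ∀ P ∈ S, ∀ Q ∈ S, ∀ R ∈ S, P ≠ Q → P ≠ R → Q ≠ R → ¬ Coll3 P Q R

/-- A complete arc: an arc which cannot be extended to a larger arc. -/
def IsCompletePGArc {F : Type*} [Field F] (S : Set (Projectivization F (Fin 3 → F))) : Prop :=
  IsPGArc S ∧ ∀ P ∉ S, ¬ IsPGArc (insert P S)


lemma li_units_smul3 {F : Type*} [Field F] (v₀ v₁ v₂ : Fin 3 → F) (c₀ c₁ c₂ : Fˣ) :
    LinearIndependent F ![c₀ • v₀, c₁ • v₁, c₂ • v₂] ↔ LinearIndependent F ![v₀, v₁, v₂] := by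
  constructor
  · intro h
    have h2 := h.units_smul ![c₀⁻¹, c₁⁻¹, c₂⁻¹]
    have he : (![c₀⁻¹, c₁⁻¹, c₂⁻¹] : Fin 3 → Fˣ) • ![c₀ • v₀, c₁ • v₁, c₂ • v₂]
        = ![v₀, v₁, v₂] := by
      funext i
      fin_cases i <;> simp [smul_smul]
    rwa [he] at h2
  · intro h
    have h2 := h.units_smul ![c₀, c₁, c₂]
    have he : (![c₀, c₁, c₂] : Fin 3 → Fˣ) • ![v₀, v₁, v₂]
        = ![c₀ • v₀, c₁ • v₁, c₂ • v₂] := by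
      funext i
      fin_cases i <;> simp
    rwa [he] at h2

lemma rep_eq_unit_smul {F : Type*} [Field F] (v : Fin 3 → F) (hv : v ≠ 0) :
    ∃ c : Fˣ, (Projectivization.mk F v hv).rep = c • v := by
  have h := Projectivization.mk_rep (Projectivization.mk F v hv)
  rw [Projectivization.mk_eq_mk_iff] at h
  obtain ⟨c, hc⟩ := h
  exact ⟨c, hc.symm⟩

lemma coll3_mk_iff {F : Type*} [Field F] (v w u : Fin 3 → F) (hv : v ≠ 0) (hw : w ≠ 0)
    (hu : u ≠ 0) :
    Coll3 (Projectivization.mk F v hv) (Projectivization.mk F w hw)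
        (Projectivization.mk F u hu) ↔ ¬ LinearIndependent F ![v, w, u] := by
  obtain ⟨c₀, hc₀⟩ := rep_eq_unit_smul v hv
  obtain ⟨c₁, hc₁⟩ := rep_eq_unit_smul w hw
  obtain ⟨c₂, hc₂⟩ := rep_eq_unit_smul u hu
  unfold Coll3
  rw [hc₀, hc₁, hc₂, li_units_smul3]

lemma not_li_det_zero {F : Type*} [Field F] (v w u : Fin 3 → F)
    (h : ¬ LinearIndependent F ![v, w, u]) :
    (Matrix.of ![v, w, u]).det = 0 := by
  by_contra hd
  exact h (Matrix.linearIndependent_rows_iff_isUnit.mpr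
    ((Matrix.isUnit_iff_isUnit_det _).mpr (isUnit_iff_ne_zero.mpr hd)))

/-- for `q ≡ 3 (mod 4)`, if `b·a⁻¹` is a square then `⟨(a,b,0)⟩` is `H`-free. -/
theorem stmt8 (F : Type*) [Field F] [Fintype F] (q : ℕ) (hcard : Fintype.card F = q)
    (hodd : Odd q) (hq3 : q % 4 = 3) (a b : F) (ha : a ≠ 0) (hb : b ≠ 0)
    (hsq : IsSquare (b * a⁻¹)) :
    PGFree (HSet F)
      (Projectivization.mk F ![a, b, 0] (vec_ne_zero _ 0 (by simpa using ha))) := by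
  have hne1 : ∀ s : F, (![1, s ^ 4, s ^ 2] : Fin 3 → F) ≠ 0 :=
    fun s => vec_ne_zero _ 0 (by simp)
  have hP : (![a, b, 0] : Fin 3 → F) ≠ 0 := vec_ne_zero _ 0 (by simpa using ha)
  constructor
  · rintro ⟨s, hs⟩
    rw [Projectivization.mk_eq_mk_iff] at hs
    obtain ⟨c, hc⟩ := hs
    have h2 : (c : F) * s ^ 2 = 0 := by
      have := congrFun hc 2
      simpa [Units.smul_def] using this
    have hs0 : s = 0 := by
      rcases mul_eq_zero.mp h2 with h | h
      · exact absurd h c.ne_zero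
      · exact pow_eq_zero_iff (by norm_num) |>.mp h
    have h1 : (c : F) * s ^ 4 = b := by
      have := congrFun hc 1
      simpa [Units.smul_def] using this
    rw [hs0] at h1
    simp at h1
    exact hb h1.symm
  · rintro ⟨Q, ⟨s, rfl⟩, R, ⟨t, rfl⟩, hQR, hcol⟩
    have hst : s ^ 2 ≠ t ^ 2 := by
      intro h
      apply hQR
      have hv : (![1, s ^ 4, s ^ 2] : Fin 3 → F) = ![1, t ^ 4, t ^ 2] := by
        have h4 : s ^ 4 = t ^ 4 := by
          have : (s ^ 2) ^ 2 = (t ^ 2) ^ 2 := by rw [h]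
          rwa [← pow_mul, ← pow_mul] at this
        rw [h, h4]
      rw [Projectivization.mk_eq_mk_iff]
      exact ⟨1, by rw [hv]; simp⟩
    rw [coll3_mk_iff] at hcol
    have hdet := not_li_det_zero _ _ _ hcol
    rw [Matrix.det_fin_three] at hdet
    simp only [Matrix.of_apply, Matrix.cons_val', Matrix.cons_val_zero, Matrix.cons_val_one,
      Matrix.head_cons, Matrix.empty_val', Matrix.cons_val_fin_one, Matrix.head_fin_const,
      Matrix.cons_val_two, Matrix.tail_cons] at hdet
    have key : (s ^ 2 - t ^ 2) * (a * (s ^ 2 * t ^ 2) + b) = 0 := by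
      linear_combination hdet
    have hmain : a * (s ^ 2 * t ^ 2) + b = 0 := by
      rcases mul_eq_zero.mp key with h | h
      · exact absurd (sub_eq_zero.mp h) hst
      · exact h
    obtain ⟨r, hr⟩ := hsq
    have hr0 : r ≠ 0 := by
      intro h
      rw [h, mul_zero] at hr
      exact (mul_ne_zero hb (inv_ne_zero ha)) hr
    have hz : (s * t) ^ 2 = -(r * r) := by
      linear_combination a⁻¹ * hmain - hr - s ^ 2 * t ^ 2 * (mul_inv_cancel₀ ha)
    have hsqneg : IsSquare (-1 : F) := by
      refine ⟨s * t * r⁻¹, ?_⟩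
      rw [show s * t * r⁻¹ * (s * t * r⁻¹) = (s * t) ^ 2 * (r⁻¹ * r⁻¹) by ring, hz]
      field_simp
    rw [FiniteField.isSquare_neg_one_iff, hcard] at hsqneg
    exact hsqneg hq3
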